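/- Let T be a bounded idempotent on a Hilbert space with ‖T‖ > 1 (a genuinely skew projection), let P be the orthogonal projection onto Ran T and Q the orthogonal projection onto Ker T. Then ‖PQ‖ < 1 and T = (I − PQ)⁻¹ P (I − PQ). -/

import Mathlib

open scoped InnerProductSpace

/-- Pythagoras for a self-adjoint idempotent. -/
lemma selfAdjoint_idem_pythagoras {H : Type*} [NormedAddCommGroup H]
    [InnerProductSpace ℂ H] [CompleteSpace H]
    (R : H →L[ℂ] H) (hR : IsSelfAdjoint R) (hR2 : IsIdempotentElem R) (x : H) :
    ‖x‖ ^ 2 = ‖R x‖ ^ 2 + ‖x - R x‖ ^ 2 := by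
  have hsym := hR.isSymmetric
  have h1 : ⟪R x, R x⟫_ℂ = ⟪x, R x⟫_ℂ := by
    have := hsym x (R x)
    simp only [ContinuousLinearMap.coe_coe] at this ⊢
    have hRR : R (R x) = R x := by
      simpa [ContinuousLinearMap.mul_apply] using DFunLike.congr_fun hR2 x
    rw [this, hRR]
  have h0 : ⟪R x, x - R x⟫_ℂ = 0 := by
    rw [inner_sub_right, h1]
    have := hsym x x
    simp only [ContinuousLinearMap.coe_coe] at this
    rw [← this]
    ring
  have h := norm_add_sq_eq_norm_sq_add_norm_sq_of_inner_eq_zero (R x) (x - R x) h0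
  rw [add_sub_cancel] at h
  simpa [pow_two] using h

/-- Let `T` be a bounded idempotent on a complex Hilbert space with `‖T‖ > 1` (a genuinely
skew projection), let `P` be the orthogonal projection onto `Ran T` and `Q` the orthogonal
projection onto `Ker T`. Then `‖PQ‖ < 1` and `T = (I − PQ)⁻¹ P (I − PQ)`. -/
theorem skew_projection_afriat
    {H : Type*} [NormedAddCommGroup H] [InnerProductSpace ℂ H] [CompleteSpace H]
    (T : H →L[ℂ] H) (hT2 : IsIdempotentElem T) (hTn : 1 < ‖T‖)
    (P : H →L[ℂ] H) (hP : IsSelfAdjoint P) (hP2 : IsIdempotentElem P)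
    (hPr : LinearMap.range (P : H →ₗ[ℂ] H) = LinearMap.range (T : H →ₗ[ℂ] H))
    (Q : H →L[ℂ] H) (hQ : IsSelfAdjoint Q) (hQ2 : IsIdempotentElem Q)
    (hQr : LinearMap.range (Q : H →ₗ[ℂ] H) = LinearMap.ker (T : H →ₗ[ℂ] H)) :
    ‖P * Q‖ < 1 ∧ T = Ring.inverse (1 - P * Q) * (P * (1 - P * Q)) := by
  have hTpos : (0 : ℝ) < ‖T‖ := by linarith
  -- pointwise facts
  have hPfix : ∀ y : H, P (P y) = P y := fun y => by
    simpa [ContinuousLinearMap.mul_apply] using DFunLike.congr_fun hP2 y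
  have hQfix : ∀ y : H, Q (Q y) = Q y := fun y => by
    simpa [ContinuousLinearMap.mul_apply] using DFunLike.congr_fun hQ2 y
  have hTfix : ∀ y : H, T (T y) = T y := fun y => by
    simpa [ContinuousLinearMap.mul_apply] using DFunLike.congr_fun hT2 y
  have hPT : ∀ x : H, P (T x) = T x := by
    intro x
    have : T x ∈ LinearMap.range (P : H →ₗ[ℂ] H) := hPr ▸ LinearMap.mem_range_self _ x
    obtain ⟨y, hy⟩ := this
    simp only [ContinuousLinearMap.coe_coe] at hy
    rw [← hy, hPfix]
  have hTP : ∀ x : H, T (P x) = P x := by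
    intro x
    have : P x ∈ LinearMap.range (T : H →ₗ[ℂ] H) := hPr ▸ LinearMap.mem_range_self _ x
    obtain ⟨y, hy⟩ := this
    simp only [ContinuousLinearMap.coe_coe] at hy
    rw [← hy, hTfix]
  have hTQ : ∀ x : H, T (Q x) = 0 := by
    intro x
    have : Q x ∈ LinearMap.ker (T : H →ₗ[ℂ] H) := hQr ▸ LinearMap.mem_range_self _ x
    exact this
  have hQker : ∀ x : H, T x = 0 → Q x = x := by
    intro x hx
    have : x ∈ LinearMap.range (Q : H →ₗ[ℂ] H) := hQr ▸ hx
    obtain ⟨y, hy⟩ := this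
    simp only [ContinuousLinearMap.coe_coe] at hy
    rw [← hy, hQfix]
  -- the norm bound
  set c : ℝ := Real.sqrt (‖T‖ ^ 2 / (1 + ‖T‖ ^ 2)) with hc
  have hc0 : 0 ≤ c := Real.sqrt_nonneg _
  have hden : (0 : ℝ) < 1 + ‖T‖ ^ 2 := by positivity
  have hcsq : c ^ 2 = ‖T‖ ^ 2 / (1 + ‖T‖ ^ 2) := Real.sq_sqrt (by positivity)
  have hx1 : ‖T‖ ^ 2 / (1 + ‖T‖ ^ 2) < 1 := by
    rw [div_lt_one hden]; linarith
  have hc1 : c < 1 := by nlinarith [hcsq, hx1, hc0]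
  have hker_bound : ∀ z : H, T z = 0 → ‖P z‖ ≤ c * ‖z‖ := by
    intro z hz
    have h1 : T (z - P z) = -(P z) := by
      rw [map_sub, hz, hTP]; simp
    have h2 : ‖P z‖ ≤ ‖T‖ * ‖z - P z‖ := by
      calc ‖P z‖ = ‖T (z - P z)‖ := by rw [h1, norm_neg]
        _ ≤ ‖T‖ * ‖z - P z‖ := T.le_opNorm _
    have hpy := selfAdjoint_idem_pythagoras P hP hP2 z
    have h3 : ‖P z‖ ^ 2 ≤ ‖T‖ ^ 2 * (‖z‖ ^ 2 - ‖P z‖ ^ 2) := by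
      have := mul_self_le_mul_self (norm_nonneg (P z)) h2
      nlinarith [norm_nonneg (z - P z), norm_nonneg (P z)]
    have h4 : ‖P z‖ ^ 2 ≤ (c * ‖z‖) ^ 2 := by
      rw [mul_pow, hcsq, div_mul_eq_mul_div, le_div_iff₀ hden]
      nlinarith
    have := Real.sqrt_le_sqrt h4
    rwa [Real.sqrt_sq (norm_nonneg _), Real.sqrt_sq (by positivity)] at this
  have hQcontr : ∀ x : H, ‖Q x‖ ≤ ‖x‖ := by
    intro x
    have hpy := selfAdjoint_idem_pythagoras Q hQ hQ2 x
    nlinarith [norm_nonneg (Q x), norm_nonneg x, sq_nonneg (‖x - Q x‖)]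
  have hnorm : ‖P * Q‖ < 1 := by
    have hle : ‖P * Q‖ ≤ c := by
      apply ContinuousLinearMap.opNorm_le_bound _ hc0
      intro x
      calc ‖(P * Q) x‖ = ‖P (Q x)‖ := rfl
        _ ≤ c * ‖Q x‖ := hker_bound (Q x) (hTQ x)
        _ ≤ c * ‖x‖ := by apply mul_le_mul_of_nonneg_left (hQcontr x) hc0
    linarith
  refine ⟨hnorm, ?_⟩
  -- operator identities
  have hPTop : P * T = T := ContinuousLinearMap.ext fun x => hPT x
  have hQTop : Q * T = Q - 1 + T := by
    ext x
    have h := hQker (x - T x) (by rw [map_sub, hTfix, sub_self])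
    have : Q (T x) = Q x - (x - T x) := by
      have := congrArg (fun w => Q x - w) h
      simpa [map_sub] using this
    simp [ContinuousLinearMap.mul_apply, this, ContinuousLinearMap.sub_apply,
      ContinuousLinearMap.add_apply, ContinuousLinearMap.one_apply]
    abel
  have halg : (1 - P * Q) * T = P * (1 - P * Q) := by
    have e1 : (1 - P * Q) * T = T - P * (Q * T) := by noncomm_ring
    rw [e1, hQTop]
    have e2 : P * (Q - 1 + T) = P * Q - P + P * T := by noncomm_ring
    rw [e2, hPTop]
    have e3 : P * (1 - P * Q) = P - P * P * Q := by noncomm_ring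
    rw [e3, hP2]
    abel
  set u : (H →L[ℂ] H)ˣ := Units.oneSub (P * Q) hnorm with hu
  have huval : (u : H →L[ℂ] H) = 1 - P * Q := rfl
  rw [NormedRing.inverse_one_sub (P * Q) hnorm]
  calc T = ↑u⁻¹ * (↑u * T) := by rw [← mul_assoc, Units.inv_mul, one_mul]
    _ = ↑u⁻¹ * (P * ↑u) := by rw [huval, halg]
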